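/- Let κ ∈ ℂ, y ∈ ℝ³, and let c = (1,1,1) ∈ ℝ³. Define the magnetic dipole field E : ℝ³ \ {y} → ℂ³ by E(x) = ∇ × ( (e^{iκ‖x−y‖}/‖x−y‖) · c ). Then on ℝ³ \ {y}, E satisfies the homogeneous time-harmonic Maxwell equation ∇ × (∇ × E)(x) = κ² E(x) for all x ≠ y. -/

import Mathlib

/-- The partial derivative `∂ᵢw(x)` of a complex-valued function on Euclidean `ℝ³`. -/
noncomputable def pdC (w : EuclideanSpace ℝ (Fin 3) → ℂ) (i : Fin 3)
    (x : EuclideanSpace ℝ (Fin 3)) : ℂ :=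
  fderiv ℝ w x (EuclideanSpace.single i 1)

/-- The curl `∇×w = (∂₂w₃ − ∂₃w₂, ∂₃w₁ − ∂₁w₃, ∂₁w₂ − ∂₂w₁)` of a complex
vector field on `ℝ³`. -/
noncomputable def curlC (w : EuclideanSpace ℝ (Fin 3) → Fin 3 → ℂ)
    (x : EuclideanSpace ℝ (Fin 3)) : Fin 3 → ℂ :=
  ![pdC (fun y => w y 2) 1 x - pdC (fun y => w y 1) 2 x,
    pdC (fun y => w y 0) 2 x - pdC (fun y => w y 2) 0 x,
    pdC (fun y => w y 1) 0 x - pdC (fun y => w y 0) 1 x]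


open Complex

noncomputable def Sq (t : ℝ) : ℂ := (Real.sqrt t : ℂ)

noncomputable def g0C (κ : ℂ) (t : ℝ) : ℂ := Complex.exp (I*κ*Sq t) * (Sq t)⁻¹
noncomputable def g1C (κ : ℂ) (t : ℝ) : ℂ :=
  Complex.exp (I*κ*Sq t) * (I*κ*Sq t - 1) * ((Sq t)⁻¹)^3 / 2
noncomputable def g2C (κ : ℂ) (t : ℝ) : ℂ :=
  Complex.exp (I*κ*Sq t) * (-κ^2*(Sq t)^2 - 3*I*κ*Sq t + 3) * ((Sq t)⁻¹)^5 / 4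

variable {κ : ℂ} {t : ℝ}

lemma Sq_ne (ht : 0 < t) : Sq t ≠ 0 := by
  simp [Sq, Complex.ofReal_eq_zero, Real.sqrt_eq_zero', not_le, ht]

lemma Sq_sq (ht : 0 < t) : (Sq t)^2 = (t : ℂ) := by
  rw [Sq, ← Complex.ofReal_pow, Real.sq_sqrt ht.le]

lemma hasDerivAt_Sq (ht : 0 < t) :
    HasDerivAt Sq ((1 / (2 * Real.sqrt t) : ℝ) : ℂ) t :=
  (Real.hasDerivAt_sqrt ht.ne').ofReal_comp

lemma hasDerivAt_g0C (ht : 0 < t) : HasDerivAt (g0C κ) (g1C κ t) t := by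
  have hS := hasDerivAt_Sq ht
  have hne := Sq_ne ht
  have hsr : Real.sqrt t ≠ 0 := by
    simpa [Sq, Complex.ofReal_eq_zero] using hne
  have h1 : HasDerivAt (fun s => Complex.exp (I*κ*Sq s))
      (Complex.exp (I*κ*Sq t) * (I*κ*((1 / (2 * Real.sqrt t) : ℝ) : ℂ))) t :=
    (hS.const_mul (I*κ)).cexp
  have h2 := HasDerivAt.scomp (𝕜:=ℝ) t (hasDerivAt_inv hne) hS
  have := h1.mul h2
  refine this.congr_deriv ?_
  unfold g1C Sq
  simp only [Function.comp_apply, smul_eq_mul]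
  push_cast
  field_simp [show ((Real.sqrt t : ℝ) : ℂ) ≠ 0 from Sq_ne ht]
  ring

lemma hasDerivAt_g1C (ht : 0 < t) : HasDerivAt (g1C κ) (g2C κ t) t := by
  have hS := hasDerivAt_Sq ht
  have hne := Sq_ne ht
  have h1 : HasDerivAt (fun s => Complex.exp (I*κ*Sq s))
      (Complex.exp (I*κ*Sq t) * (I*κ*((1 / (2 * Real.sqrt t) : ℝ) : ℂ))) t :=
    (hS.const_mul (I*κ)).cexp
  have h3 : HasDerivAt (fun s => I*κ*Sq s - 1) (I*κ*((1 / (2 * Real.sqrt t) : ℝ) : ℂ)) t :=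
    (hS.const_mul (I*κ)).sub_const 1
  have h2 := HasDerivAt.scomp (𝕜:=ℝ) t (hasDerivAt_inv hne) hS
  have hpow := HasDerivAt.scomp (𝕜:=ℝ) t (hasDerivAt_pow 3 ((Sq t)⁻¹)) h2
  have := ((h1.mul h3).mul hpow).div_const 2
  refine this.congr_deriv ?_
  unfold g2C Sq
  simp only [Function.comp_apply, smul_eq_mul, inv_pow, Pi.mul_apply]
  push_cast
  field_simp [show ((Real.sqrt t : ℝ) : ℂ) ≠ 0 from Sq_ne ht]
  ring_nf
  simp only [Complex.I_sq]
  field_simp [show ((Real.sqrt t : ℝ) : ℂ) ≠ 0 from Sq_ne ht]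
  ring

lemma differentiableAt_g2C (ht : 0 < t) : DifferentiableAt ℝ (g2C κ) t := by
  have hS := (hasDerivAt_Sq ht).differentiableAt
  have hne := Sq_ne ht
  have hinv : DifferentiableAt ℝ (fun s => (Sq s)⁻¹) t :=
    (HasDerivAt.scomp (𝕜:=ℝ) t (hasDerivAt_inv hne) (hasDerivAt_Sq ht)).differentiableAt
  unfold g2C
  apply DifferentiableAt.div_const
  apply DifferentiableAt.mul
  · apply DifferentiableAt.mul
    · exact (hS.const_mul (I*κ)).cexp
    · exact (((hS.pow 2).const_mul (-κ^2)).sub (hS.const_mul (3*I*κ))).add_const 3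
  · exact hinv.pow 5

lemma helmC (κ : ℂ) (ht : 0 < t) : 4*(t:ℂ)*g2C κ t + 6*g1C κ t + κ^2*g0C κ t = 0 := by
  have h := Sq_sq ht
  have hne := Sq_ne ht
  unfold g0C g1C g2C
  rw [← h]
  simp only [inv_pow]
  field_simp [hne]
  ring


noncomputable section

/-! Euclidean layer -/

abbrev EE := EuclideanSpace ℝ (Fin 3)

def qE (y x : EE) : ℝ := ‖x - y‖ ^ 2
def DcE (y : EE) (i : Fin 3) (x : EE) : ℂ := ((x i - y i : ℝ) : ℂ)
def uE (κ : ℂ) (y : EE) (x : EE) : ℂ :=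
  Complex.exp (Complex.I * κ * ‖x - y‖) / (‖x - y‖ : ℂ)
def PE (κ : ℂ) (y : EE) (i : Fin 3) (x : EE) : ℂ := 2 * g1C κ (qE y x) * DcE y i x
def SigE (y : EE) (x : EE) : ℂ := DcE y 0 x + DcE y 1 x + DcE y 2 x
def FE (κ : ℂ) (y : EE) (a : Fin 3) (x : EE) : ℂ :=
  4 * g2C κ (qE y x) * DcE y a x * SigE y x + 2 * g1C κ (qE y x)
    + κ^2 * g0C κ (qE y x)

def DqE (y x : EE) : EE →L[ℝ] ℝ :=
  2 • ((innerSL ℝ (x - y)).comp (ContinuousLinearMap.id ℝ EE))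

def LcE (i : Fin 3) : EE →L[ℝ] ℂ :=
  Complex.ofRealCLM.comp (EuclideanSpace.proj i)

variable {κ : ℂ} {y x : EE}

lemma qE_pos (hx : x ≠ y) : 0 < qE y x := by
  have h : 0 < ‖x - y‖ := by
    rw [norm_pos_iff, sub_ne_zero]; exact hx
  unfold qE; positivity

lemma hasFDerivAt_qE : HasFDerivAt (qE y) (DqE y x) x :=
  ((hasFDerivAt_id x).sub_const y).norm_sq

lemma DqE_apply (i : Fin 3) :
    DqE y x (EuclideanSpace.single i 1) = 2 * (x i - y i) := by
  simp [DqE, EuclideanSpace.inner_single_right]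

lemma hasFDerivAt_DcE (i : Fin 3) : HasFDerivAt (DcE y i) (LcE i) x := by
  have h1 : HasFDerivAt (fun z : EE => z i)
      (EuclideanSpace.proj (𝕜 := ℝ) i : EE →L[ℝ] ℝ) x :=
    (EuclideanSpace.proj (𝕜 := ℝ) i).hasFDerivAt
  exact Complex.ofRealCLM.hasFDerivAt.comp x (h1.sub_const (y i))

lemma LcE_apply (i j : Fin 3) :
    LcE i (EuclideanSpace.single j 1) = if i = j then 1 else 0 := by
  simp [LcE, EuclideanSpace.single_apply]
  split_ifs <;> simp

lemma pdC_of_hasFDerivAt {f : EE → ℂ} {L : EE →L[ℝ] ℂ}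
    (h : HasFDerivAt f L x) (i : Fin 3) :
    pdC f i x = L (EuclideanSpace.single i 1) := by
  rw [pdC, h.fderiv]

lemma hasFDerivAt_comp_q {φ : ℝ → ℂ} {c : ℂ} (hφ : HasDerivAt φ c (qE y x)) :
    HasFDerivAt (fun z => φ (qE y z))
      ((ContinuousLinearMap.smulRight (1 : ℝ →L[ℝ] ℝ) c).comp (DqE y x)) x :=
  hφ.hasFDerivAt.comp x hasFDerivAt_qE

lemma uE_eq : uE κ y = fun z => g0C κ (qE y z) := by
  funext z
  unfold uE g0C Sq qE
  rw [Real.sqrt_sq (norm_nonneg _), div_eq_mul_inv]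

lemma pdC_uE (hx : x ≠ y) (i : Fin 3) : pdC (uE κ y) i x = PE κ y i x := by
  have h := hasFDerivAt_comp_q (y := y) (hasDerivAt_g0C (qE_pos hx) (κ := κ))
  rw [uE_eq, pdC_of_hasFDerivAt h i]
  simp only [ContinuousLinearMap.comp_apply, ContinuousLinearMap.smulRight_apply,
    ContinuousLinearMap.one_apply, DqE_apply, PE, DcE, Complex.real_smul]
  push_cast
  ring

lemma pdC_PE (hx : x ≠ y) (i j : Fin 3) :
    pdC (PE κ y i) j x = 4 * g2C κ (qE y x) * DcE y i x * DcE y j x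
      + 2 * g1C κ (qE y x) * (if i = j then 1 else 0) := by
  have h1 := hasFDerivAt_comp_q (y := y) (hasDerivAt_g1C (qE_pos hx) (κ := κ))
  have h := (h1.const_mul (2:ℂ)).mul (hasFDerivAt_DcE (y := y) i)
  unfold PE
  rw [pdC_of_hasFDerivAt (f := fun x => 2 * g1C κ (qE y x) * DcE y i x) h j]
  simp only [ContinuousLinearMap.add_apply, ContinuousLinearMap.smul_apply,
    ContinuousLinearMap.comp_apply, ContinuousLinearMap.smulRight_apply,
    ContinuousLinearMap.one_apply, DqE_apply, LcE_apply, PE, DcE, smul_eq_mul,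
    Complex.real_smul]
  push_cast
  split_ifs <;> ring

lemma hasFDerivAt_SigE : HasFDerivAt (SigE y) (LcE 0 + LcE 1 + LcE 2) x :=
  ((hasFDerivAt_DcE 0).add (hasFDerivAt_DcE 1)).add (hasFDerivAt_DcE 2)

lemma LcE_sum_apply (b : Fin 3) :
    (LcE 0 + LcE 1 + LcE 2) (EuclideanSpace.single b 1) = 1 := by
  simp only [ContinuousLinearMap.add_apply, LcE_apply]
  fin_cases b <;> norm_num [Fin.ext_iff]

lemma ite3C (b : Fin 3) :
    ((if (0:Fin 3) = b then (1:ℂ) else 0) + if (1:Fin 3) = b then (1:ℂ) else 0)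
      + (if (2:Fin 3) = b then (1:ℂ) else 0) = 1 := by
  fin_cases b <;> norm_num [Fin.ext_iff]

lemma pdC_FE (hx : x ≠ y) (a b : Fin 3) :
    pdC (FE κ y a) b x
      = 8 * deriv (g2C κ) (qE y x) * DcE y a x * DcE y b x * SigE y x
        + 4 * g2C κ (qE y x) * (if a = b then 1 else 0) * SigE y x
        + 4 * g2C κ (qE y x) * DcE y a x
        + 4 * g2C κ (qE y x) * DcE y b x
        + 2 * κ^2 * g1C κ (qE y x) * DcE y b x := by
  have h2 := hasFDerivAt_comp_q (y := y)
    ((differentiableAt_g2C (qE_pos hx) (κ := κ)).hasDerivAt)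
  have h1 := hasFDerivAt_comp_q (y := y) (hasDerivAt_g1C (qE_pos hx) (κ := κ))
  have h0 := hasFDerivAt_comp_q (y := y) (hasDerivAt_g0C (qE_pos hx) (κ := κ))
  have h := ((((h2.const_mul (4:ℂ)).mul (hasFDerivAt_DcE (y := y) a)).mul
    (hasFDerivAt_SigE (y := y))).add (h1.const_mul (2:ℂ))).add (h0.const_mul (κ^2))
  unfold FE
  rw [pdC_of_hasFDerivAt (f := fun x => 4 * g2C κ (qE y x) * DcE y a x * SigE y x + 2 * g1C κ (qE y x) + κ ^ 2 * g0C κ (qE y x)) h b]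
  simp only [ContinuousLinearMap.add_apply, ContinuousLinearMap.smul_apply,
    ContinuousLinearMap.comp_apply, ContinuousLinearMap.smulRight_apply,
    ContinuousLinearMap.one_apply, DqE_apply, LcE_apply, ite3C, DcE,
    smul_eq_mul, Complex.real_smul, Pi.mul_apply]
  push_cast
  rcases eq_or_ne a b with rfl | hab
  · simp only [if_pos rfl]; ring
  · rw [if_neg hab]; ring

lemma qE_eq_sum : ((qE y x : ℝ) : ℂ)
    = DcE y 0 x ^ 2 + DcE y 1 x ^ 2 + DcE y 2 x ^ 2 := by
  unfold qE DcE
  rw [EuclideanSpace.norm_eq, Real.sq_sqrt (by positivity), Fin.sum_univ_three]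
  simp only [Real.norm_eq_abs, PiLp.sub_apply]
  norm_cast
  simp [sq_abs]

lemma pdC_congr_nhds {f g : EE → ℂ} (h : f =ᶠ[nhds x] g) (i : Fin 3) :
    pdC f i x = pdC g i x := by
  rw [pdC, pdC, h.fderiv_eq]

lemma pdC_sub {f g : EE → ℂ} (hf : DifferentiableAt ℝ f x)
    (hg : DifferentiableAt ℝ g x) (i : Fin 3) :
    pdC (fun z => f z - g z) i x = pdC f i x - pdC g i x := by
  rw [pdC, pdC, pdC, fderiv_fun_sub hf hg, ContinuousLinearMap.sub_apply]

lemma diff_PE (hx : x ≠ y) (i : Fin 3) : DifferentiableAt ℝ (PE κ y i) x := by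
  have h1 := hasFDerivAt_comp_q (y := y) (hasDerivAt_g1C (qE_pos hx) (κ := κ))
  have h := (h1.const_mul (2:ℂ)).mul (hasFDerivAt_DcE (y := y) i)
  unfold PE
  exact h.differentiableAt

lemma mem_ne_nhds (hx : x ≠ y) : {z : EE | z ≠ y} ∈ nhds x :=
  isOpen_ne.mem_nhds hx

lemma Pdiff_ev (hx : x ≠ y) (i j : Fin 3) :
    (fun z => pdC (uE κ y) i z - pdC (uE κ y) j z)
      =ᶠ[nhds x] (fun z => PE κ y i z - PE κ y j z) :=
  Filter.eventually_of_mem (mem_ne_nhds hx) fun z hz => by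
    show pdC (uE κ y) i z - pdC (uE κ y) j z = PE κ y i z - PE κ y j z
    rw [pdC_uE hz, pdC_uE hz]

lemma curlE_eq (κ : ℂ) (y : EE) (E : EE → Fin 3 → ℂ)
    (hE0 : ∀ z, E z 0 = pdC (uE κ y) 1 z - pdC (uE κ y) 2 z)
    (hE1 : ∀ z, E z 1 = pdC (uE κ y) 2 z - pdC (uE κ y) 0 z)
    (hE2 : ∀ z, E z 2 = pdC (uE κ y) 0 z - pdC (uE κ y) 1 z)
    (hx : x ≠ y) (k : Fin 3) : curlC E x k = FE κ y k x := by
  have helm := helmC (t := qE y x) κ (qE_pos hx)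
  have hqs := qE_eq_sum (y := y) (x := x)
  fin_cases k
  · show curlC E x 0 = FE κ y 0 x
    have h : curlC E x 0 = pdC (fun z => E z 2) 1 x - pdC (fun z => E z 1) 2 x := rfl
    rw [h, show (fun z => E z 2) = fun z => pdC (uE κ y) 0 z - pdC (uE κ y) 1 z
        from funext hE2,
      show (fun z => E z 1) = fun z => pdC (uE κ y) 2 z - pdC (uE κ y) 0 z
        from funext hE1,
      pdC_congr_nhds (Pdiff_ev hx 0 1) 1, pdC_congr_nhds (Pdiff_ev hx 2 0) 2,
      pdC_sub (diff_PE hx 0) (diff_PE hx 1) 1, pdC_sub (diff_PE hx 2) (diff_PE hx 0) 2,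
      pdC_PE hx 0 1, pdC_PE hx 1 1, pdC_PE hx 2 2, pdC_PE hx 0 2]
    unfold FE SigE
    norm_num [Fin.ext_iff]
    linear_combination (-1 : ℂ) * helm + 4 * g2C κ (qE y x) * hqs
  · show curlC E x 1 = FE κ y 1 x
    have h : curlC E x 1 = pdC (fun z => E z 0) 2 x - pdC (fun z => E z 2) 0 x := rfl
    rw [h, show (fun z => E z 0) = fun z => pdC (uE κ y) 1 z - pdC (uE κ y) 2 z
        from funext hE0,
      show (fun z => E z 2) = fun z => pdC (uE κ y) 0 z - pdC (uE κ y) 1 z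
        from funext hE2,
      pdC_congr_nhds (Pdiff_ev hx 1 2) 2, pdC_congr_nhds (Pdiff_ev hx 0 1) 0,
      pdC_sub (diff_PE hx 1) (diff_PE hx 2) 2, pdC_sub (diff_PE hx 0) (diff_PE hx 1) 0,
      pdC_PE hx 1 2, pdC_PE hx 2 2, pdC_PE hx 0 0, pdC_PE hx 1 0]
    unfold FE SigE
    norm_num [Fin.ext_iff]
    linear_combination (-1 : ℂ) * helm + 4 * g2C κ (qE y x) * hqs
  · show curlC E x 2 = FE κ y 2 x
    have h : curlC E x 2 = pdC (fun z => E z 1) 0 x - pdC (fun z => E z 0) 1 x := rfl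
    rw [h, show (fun z => E z 1) = fun z => pdC (uE κ y) 2 z - pdC (uE κ y) 0 z
        from funext hE1,
      show (fun z => E z 0) = fun z => pdC (uE κ y) 1 z - pdC (uE κ y) 2 z
        from funext hE0,
      pdC_congr_nhds (Pdiff_ev hx 2 0) 0, pdC_congr_nhds (Pdiff_ev hx 1 2) 1,
      pdC_sub (diff_PE hx 2) (diff_PE hx 0) 0, pdC_sub (diff_PE hx 1) (diff_PE hx 2) 1,
      pdC_PE hx 2 0, pdC_PE hx 0 0, pdC_PE hx 1 1, pdC_PE hx 2 1]
    unfold FE SigE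
    norm_num [Fin.ext_iff]
    linear_combination (-1 : ℂ) * helm + 4 * g2C κ (qE y x) * hqs


end

/-- The magnetic dipole field `E = ∇ × (e^{iκ‖x−y‖}/‖x−y‖ · (1,1,1))` satisfies
`∇ × (∇ × E) = κ² E` away from the dipole point `y`. -/
theorem stmt15 (κ : ℂ) (y : EuclideanSpace ℝ (Fin 3))
    (A : EuclideanSpace ℝ (Fin 3) → Fin 3 → ℂ)
    (hA : ∀ x i, A x i = Complex.exp (Complex.I * κ * ‖x - y‖) / (‖x - y‖ : ℂ))
    (E : EuclideanSpace ℝ (Fin 3) → Fin 3 → ℂ)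
    (hE : ∀ x, E x = curlC A x) :
    ∀ x : EuclideanSpace ℝ (Fin 3), x ≠ y → curlC (curlC E) x = κ ^ 2 • E x := by
  intro x hx
  have hAfun : ∀ i : Fin 3, (fun z => A z i) = uE κ y := fun i => funext fun z => hA z i
  have hE0 : ∀ z, E z 0 = pdC (uE κ y) 1 z - pdC (uE κ y) 2 z := fun z => by
    rw [hE z]
    show pdC (fun w => A w 2) 1 z - pdC (fun w => A w 1) 2 z = _
    rw [hAfun 2, hAfun 1]
  have hE1 : ∀ z, E z 1 = pdC (uE κ y) 2 z - pdC (uE κ y) 0 z := fun z => by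
    rw [hE z]
    show pdC (fun w => A w 0) 2 z - pdC (fun w => A w 2) 0 z = _
    rw [hAfun 0, hAfun 2]
  have hE2 : ∀ z, E z 2 = pdC (uE κ y) 0 z - pdC (uE κ y) 1 z := fun z => by
    rw [hE z]
    show pdC (fun w => A w 1) 0 z - pdC (fun w => A w 0) 1 z = _
    rw [hAfun 1, hAfun 0]
  have hcurl : ∀ a : Fin 3, (fun z => curlC E z a) =ᶠ[nhds x] FE κ y a := fun a =>
    Filter.eventually_of_mem (mem_ne_nhds hx) fun z hz =>
      curlE_eq κ y E hE0 hE1 hE2 hz a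
  funext k
  fin_cases k
  · show curlC (curlC E) x 0 = (κ ^ 2 • E x) 0
    have h : curlC (curlC E) x 0
        = pdC (fun z => curlC E z 2) 1 x - pdC (fun z => curlC E z 1) 2 x := rfl
    rw [h, pdC_congr_nhds (hcurl 2) 1, pdC_congr_nhds (hcurl 1) 2,
      pdC_FE hx 2 1, pdC_FE hx 1 2, Pi.smul_apply, smul_eq_mul, hE0 x,
      pdC_uE hx, pdC_uE hx]
    unfold PE
    norm_num [Fin.ext_iff]
    ring
  · show curlC (curlC E) x 1 = (κ ^ 2 • E x) 1
    have h : curlC (curlC E) x 1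
        = pdC (fun z => curlC E z 0) 2 x - pdC (fun z => curlC E z 2) 0 x := rfl
    rw [h, pdC_congr_nhds (hcurl 0) 2, pdC_congr_nhds (hcurl 2) 0,
      pdC_FE hx 0 2, pdC_FE hx 2 0, Pi.smul_apply, smul_eq_mul, hE1 x,
      pdC_uE hx, pdC_uE hx]
    unfold PE
    norm_num [Fin.ext_iff]
    ring
  · show curlC (curlC E) x 2 = (κ ^ 2 • E x) 2
    have h : curlC (curlC E) x 2
        = pdC (fun z => curlC E z 1) 0 x - pdC (fun z => curlC E z 0) 1 x := rfl
    rw [h, pdC_congr_nhds (hcurl 1) 0, pdC_congr_nhds (hcurl 0) 1,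
      pdC_FE hx 1 0, pdC_FE hx 0 1, Pi.smul_apply, smul_eq_mul, hE2 x,
      pdC_uE hx, pdC_uE hx]
    unfold PE
    norm_num [Fin.ext_iff]
    ring
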